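/- Let C ⊆ ℝⁿ be a convex set, x⁰ ∈ C and u ∈ T(C; x⁰). Then T²(C; x⁰, u) ⊆ cl cone(cone(C − x⁰) − u), where for S ⊆ ℝⁿ, cone S := {β s : β ≥ 0, s ∈ S} and cl denotes topological closure. -/

import Mathlib

open Filter Topology Set
open scoped InnerProductSpace

noncomputable section

/-- The (first-order) tangent cone `T(C; x⁰)`. -/
def tcone {n : ℕ} (C : Set (EuclideanSpace ℝ (Fin n)))
    (x0 : EuclideanSpace ℝ (Fin n)) : Set (EuclideanSpace ℝ (Fin n)) :=
  {d | ∃ t : ℕ → ℝ, ∃ dk : ℕ → EuclideanSpace ℝ (Fin n),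
    (∀ k, 0 < t k) ∧ Tendsto t atTop (𝓝 0) ∧ Tendsto dk atTop (𝓝 d) ∧
    ∀ k, x0 + t k • dk k ∈ C}

/-- The second-order tangent set `T²(C; x⁰, u)`. -/
def tcone2 {n : ℕ} (C : Set (EuclideanSpace ℝ (Fin n)))
    (x0 u : EuclideanSpace ℝ (Fin n)) : Set (EuclideanSpace ℝ (Fin n)) :=
  {v | ∃ t : ℕ → ℝ, ∃ vk : ℕ → EuclideanSpace ℝ (Fin n),
    (∀ k, 0 < t k) ∧ Tendsto t atTop (𝓝 0) ∧ Tendsto vk atTop (𝓝 v) ∧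
    ∀ k, x0 + t k • u + ((1 / 2) * (t k) ^ 2) • vk k ∈ C}

/-- The conic hull `cone S = {β s : β ≥ 0, s ∈ S}`. -/
def coneOf {n : ℕ} (S : Set (EuclideanSpace ℝ (Fin n))) :
    Set (EuclideanSpace ℝ (Fin n)) :=
  {x | ∃ β : ℝ, 0 ≤ β ∧ ∃ s ∈ S, x = β • s}

/-- For a convex set `C` and `u ∈ T(C; x⁰)`:
`T²(C; x⁰, u) ⊆ cl cone(cone(C − x⁰) − u)`. -/
theorem stmt_8 {n : ℕ} (C : Set (EuclideanSpace ℝ (Fin n))) (hC : Convex ℝ C)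
    (x0 : EuclideanSpace ℝ (Fin n)) (hx0 : x0 ∈ C)
    (u : EuclideanSpace ℝ (Fin n)) (hu : u ∈ tcone C x0) :
    tcone2 C x0 u ⊆
      closure (coneOf ((fun y => y - u) '' coneOf ((fun c => c - x0) '' C))) := by
  rintro v ⟨t, vk, htpos, ht0, hvk, hmem⟩
  refine mem_closure_of_tendsto hvk (Filter.Eventually.of_forall fun k => ?_)
  have htk := htpos k
  refine ⟨2 / t k, by positivity, ((1 / 2) * t k) • vk k, ?_, ?_⟩
  · refine ⟨u + ((1 / 2) * t k) • vk k, ⟨1 / t k, by positivity,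
      x0 + t k • u + ((1 / 2) * (t k) ^ 2) • vk k - x0,
      ⟨_, hmem k, rfl⟩, ?_⟩, by simp⟩
    match_scalars <;> field_simp <;> ring
  · rw [smul_smul]
    field_simp
    rw [one_smul]
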